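/- Consider the Frank-Wolfe algorithm with exact line-search γ_t ∈ argmin_{γ∈[0,1]} f(x_t + γ(s_t − x_t)) on a continuously differentiable (possibly non-convex) f with curvature constant C_f over a compact convex M. Then min_{0≤k≤t} g_k ≤ max{2h_0, C_f}/√(t+1) for all t ≥ 0, where h_0 := f(x_0) − min_{x∈M} f(x). -/

import Mathlib

open RealInnerProductSpace

/-- convergence of Frank-Wolfe with exact line-search on a possibly
non-convex `f` with finite curvature constant `C_f`:
`min_{0≤k≤t} g_k ≤ max{2h_0, C_f}/√(t+1)`, where `h_0 = f(x_0) - min_{x∈M} f(x)`. -/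
theorem frankWolfe_nonconvex_convergence_lineSearch {d : ℕ}
    (f : EuclideanSpace ℝ (Fin d) → ℝ) (M : Set (EuclideanSpace ℝ (Fin d)))
    (hMne : M.Nonempty) (hMcp : IsCompact M) (hMcv : Convex ℝ M) (hf : ContDiff ℝ 1 f)
    (Cf : ℝ)
    (hCf : Cf = sSup {c : ℝ | ∃ x ∈ M, ∃ s ∈ M, ∃ γ ∈ Set.Ioc (0:ℝ) 1,
      c = 2 / γ ^ 2 * (f (x + γ • (s - x)) - f x - γ * ⟪gradient f x, s - x⟫)})
    (hbdd : BddAbove {c : ℝ | ∃ x ∈ M, ∃ s ∈ M, ∃ γ ∈ Set.Ioc (0:ℝ) 1,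
      c = 2 / γ ^ 2 * (f (x + γ • (s - x)) - f x - γ * ⟪gradient f x, s - x⟫)})
    (x s : ℕ → EuclideanSpace ℝ (Fin d)) (g γ : ℕ → ℝ)
    (hx0 : x 0 ∈ M)
    (hsM : ∀ t, s t ∈ M)
    (hsmin : ∀ t, ∀ s' ∈ M, ⟪s t, gradient f (x t)⟫ ≤ ⟪s', gradient f (x t)⟫)
    (hg : ∀ t, g t = ⟪s t - x t, -gradient f (x t)⟫)
    (hγmem : ∀ t, γ t ∈ Set.Icc (0:ℝ) 1)
    (hls : ∀ t, ∀ γ' ∈ Set.Icc (0:ℝ) 1,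
      f (x t + γ t • (s t - x t)) ≤ f (x t + γ' • (s t - x t)))
    (hxsucc : ∀ t, x (t + 1) = x t + γ t • (s t - x t)) :
    ∀ t : ℕ,
      (Finset.range (t + 1)).inf' Finset.nonempty_range_add_one g ≤
        max (2 * (f (x 0) - sInf (f '' M))) Cf / Real.sqrt ((t : ℝ) + 1) := by
  intro t
  have hxM : ∀ k, x k ∈ M := by
    intro k
    induction k with
    | zero => exact hx0
    | succ n ih =>
      have h : (1 - γ n) • x n + γ n • s n ∈ M :=
        hMcv ih (hsM n) (by linarith [(hγmem n).2]) (hγmem n).1 (by ring)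
      have he : x n + γ n • (s n - x n) = (1 - γ n) • x n + γ n • s n := by module
      rw [hxsucc n, he]; exact h
  have hcont : Continuous f := hf.continuous
  have hbb : BddBelow (f '' M) := (hMcp.image hcont).bddBelow
  have hInf_le : ∀ k, sInf (f '' M) ≤ f (x k) := fun k =>
    csInf_le hbb ⟨x k, hxM k, rfl⟩
  have hCf0 : 0 ≤ Cf := by
    obtain ⟨m, hm⟩ := hMne
    have h0mem : (0:ℝ) ∈ {c : ℝ | ∃ x ∈ M, ∃ s ∈ M, ∃ γ ∈ Set.Ioc (0:ℝ) 1,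
        c = 2 / γ ^ 2 * (f (x + γ • (s - x)) - f x - γ * ⟪gradient f x, s - x⟫)} := by
      refine ⟨m, hm, m, hm, 1, ⟨one_pos, le_refl 1⟩, ?_⟩
      simp
    rw [hCf]
    exact le_csSup hbdd h0mem
  have hginner : ∀ k, ⟪gradient f (x k), s k - x k⟫ = - g k := by
    intro k
    rw [hg k, inner_neg_right, real_inner_comm]
    ring
  set G := (Finset.range (t + 1)).inf' Finset.nonempty_range_add_one g with hGdef
  have hGle : ∀ k ≤ t, G ≤ g k := fun k hk =>
    Finset.inf'_le g (Finset.mem_range.mpr (by omega))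
  have hsq1 : (0:ℝ) < Real.sqrt ((t:ℝ) + 1) := Real.sqrt_pos.mpr (by positivity)
  have hmax0 : 0 ≤ max (2 * (f (x 0) - sInf (f '' M))) Cf :=
    le_trans hCf0 (le_max_right _ _)
  by_cases hGpos : 0 < G
  swap
  · exact le_trans (not_lt.mp hGpos) (div_nonneg hmax0 hsq1.le)
  -- per-step decrease bound
  have step : ∀ γ' ∈ Set.Ioc (0:ℝ) 1, ∀ k ≤ t,
      f (x (k+1)) ≤ f (x k) - γ' * G + γ' ^ 2 / 2 * Cf := by
    intro γ' hγ' k hk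
    have hγp : 0 < γ' := hγ'.1
    have hmem : 2 / γ' ^ 2 * (f (x k + γ' • (s k - x k)) - f (x k)
        - γ' * ⟪gradient f (x k), s k - x k⟫) ∈
        {c : ℝ | ∃ x ∈ M, ∃ s ∈ M, ∃ γ ∈ Set.Ioc (0:ℝ) 1,
        c = 2 / γ ^ 2 * (f (x + γ • (s - x)) - f x - γ * ⟪gradient f x, s - x⟫)} :=
      ⟨x k, hxM k, s k, hsM k, γ', hγ', rfl⟩
    have hle : 2 / γ' ^ 2 * (f (x k + γ' • (s k - x k)) - f (x k)
        - γ' * ⟪gradient f (x k), s k - x k⟫) ≤ Cf := hCf ▸ le_csSup hbdd hmem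
    rw [div_mul_eq_mul_div, div_le_iff₀ (by positivity : (0:ℝ) < γ' ^ 2),
      hginner k] at hle
    have hls' := hls k γ' ⟨hγp.le, hγ'.2⟩
    have hmul : γ' * G ≤ γ' * g k := mul_le_mul_of_nonneg_left (hGle k hk) hγp.le
    rw [hxsucc k]
    linarith
  -- telescoping
  have tele : ∀ γ' ∈ Set.Ioc (0:ℝ) 1,
      ((t:ℝ) + 1) * (γ' * G - γ' ^ 2 / 2 * Cf) ≤ f (x 0) - sInf (f '' M) := by
    intro γ' hγ'
    have key : ∀ k, k ≤ t + 1 →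
        f (x k) ≤ f (x 0) - (k:ℝ) * (γ' * G - γ' ^ 2 / 2 * Cf) := by
      intro k
      induction k with
      | zero => intro _; simp
      | succ n ih =>
        intro hn
        have h1 := step γ' hγ' n (by omega)
        have h2 := ih (by omega)
        push_cast
        push_cast at h2
        linarith
    have hkey := key (t+1) le_rfl
    have h3 := hInf_le (t+1)
    push_cast at hkey
    linarith
  set h0 := f (x 0) - sInf (f '' M) with hh0
  have hh00 : 0 ≤ h0 := by
    have := hInf_le 0
    simp only [hh0]
    linarith
  rw [le_div_iff₀ hsq1]
  by_cases hc : Cf < G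
  · -- use γ' = 1
    have hk := tele 1 ⟨one_pos, le_refl 1⟩
    have ht0 : (0:ℝ) ≤ (t:ℝ) := Nat.cast_nonneg t
    have h2 : G * ((t:ℝ)+1) ≤ 2 * h0 := by nlinarith
    have h3 : Real.sqrt ((t:ℝ)+1) ≤ (t:ℝ)+1 := by
      have := Real.sqrt_le_sqrt (show (t:ℝ)+1 ≤ ((t:ℝ)+1)^2 by nlinarith)
      rwa [Real.sqrt_sq (by linarith)] at this
    calc G * Real.sqrt ((t:ℝ)+1) ≤ G * ((t:ℝ)+1) :=
          mul_le_mul_of_nonneg_left h3 hGpos.le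
      _ ≤ 2 * h0 := h2
      _ ≤ max (2 * h0) Cf := le_max_left _ _
  · push_neg at hc
    have hCfpos : 0 < Cf := lt_of_lt_of_le hGpos hc
    have hγIoc : G / Cf ∈ Set.Ioc (0:ℝ) 1 :=
      ⟨div_pos hGpos hCfpos, (div_le_one hCfpos).mpr hc⟩
    have hk := tele (G/Cf) hγIoc
    have hexp : (G/Cf) * G - (G/Cf)^2/2*Cf = G^2/(2*Cf) := by
      field_simp
      ring
    rw [hexp] at hk
    have ht0 : (0:ℝ) ≤ (t:ℝ) := Nat.cast_nonneg t
    have h2 : G^2 * ((t:ℝ)+1) ≤ 2 * h0 * Cf := by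
      have h := mul_le_mul_of_nonneg_right hk hCfpos.le
      have he2 : ((t:ℝ)+1) * (G^2/(2*Cf)) * Cf = G^2*((t:ℝ)+1)/2 := by
        field_simp
      rw [he2] at h
      nlinarith
    have a1 : 2*h0 ≤ max (2*h0) Cf := le_max_left _ _
    have a2 : Cf ≤ max (2*h0) Cf := le_max_right _ _
    have h4 : (G * Real.sqrt ((t:ℝ)+1))^2 ≤ (max (2*h0) Cf)^2 := by
      rw [mul_pow, Real.sq_sqrt (by positivity)]
      nlinarith
    have h5 := Real.sqrt_le_sqrt h4
    rwa [Real.sqrt_sq (by positivity), Real.sqrt_sq hmax0] at h5
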